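/- With c₁ = (1,-1,0,0) (so that c₁ = ½e₁ + ½d₃ + ½d₄ lies on the 3-dimensional cone cone(e₁,d₃,d₄)), the cone σ₁₃ = cone(e₁,d₃,e₃,d₄) equals the union cone(c₁,d₃,e₃,d₄) ∪ cone(e₁,c₁,e₃,d₄) ∪ cone(e₁,d₃,e₃,c₁), and each of these three cones has generator matrix (columns in the listed order) of determinant 1. -/

import Mathlib

open Matrix

noncomputable section

def e1 : Fin 4 → ℝ := ![1, 0, 0, 0]
def e2 : Fin 4 → ℝ := ![0, 1, 0, 0]
def e3 : Fin 4 → ℝ := ![0, 0, 1, 0]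
def e4 : Fin 4 → ℝ := ![0, 0, 0, 1]
def d1 : Fin 4 → ℝ := ![-1, 0, -2, 1]
def d2 : Fin 4 → ℝ := ![-2, -1, 0, 1]
def d3 : Fin 4 → ℝ := ![0, -2, -1, 1]
def d4 : Fin 4 → ℝ := ![1, 0, 1, -1]
def c1 : Fin 4 → ℝ := ![1, -1, 0, 0]

/-- The cone generated by four vectors: all nonnegative linear combinations. -/
def cone4 (v1 v2 v3 v4 : Fin 4 → ℝ) : Set (Fin 4 → ℝ) :=
  {x | ∃ a b c d : ℝ, 0 ≤ a ∧ 0 ≤ b ∧ 0 ≤ c ∧ 0 ≤ d ∧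
    x = a • v1 + b • v2 + c • v3 + d • v4}

/-- The 4×4 matrix whose columns are `v1, v2, v3, v4` (in this order). -/
def colMat (v1 v2 v3 v4 : Fin 4 → ℝ) : Matrix (Fin 4) (Fin 4) ℝ :=
  (Matrix.of ![v1, v2, v3, v4])ᵀ

theorem subdivision_of_sigma13 :
    c1 = (1/2 : ℝ) • e1 + (1/2 : ℝ) • d3 + (1/2 : ℝ) • d4 ∧
    cone4 e1 d3 e3 d4 =
      cone4 c1 d3 e3 d4 ∪
      cone4 e1 c1 e3 d4 ∪
      cone4 e1 d3 e3 c1 ∧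
    (colMat c1 d3 e3 d4).det = 1 ∧
    (colMat e1 c1 e3 d4).det = 1 ∧
    (colMat e1 d3 e3 c1).det = 1 := by

  refine ⟨?_, ?_, ?_, ?_, ?_⟩
  · funext i; fin_cases i <;> norm_num [c1, e1, d3, d4]
  · ext x
    constructor
    · rintro ⟨a, b, c, d, ha, hb, hc, hd, rfl⟩
      rcases le_total a b with hab | hab
      · rcases le_total a d with had | had
        · left; left
          exact ⟨2*a, b - a, c, d - a, by positivity, by linarith, hc, by linarith,
            by funext i; fin_cases i <;> simp [e1, d3, e3, d4, c1] <;> ring⟩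
        · right
          exact ⟨a - d, b - d, c, 2*d, by linarith, by linarith, hc, by positivity,
            by funext i; fin_cases i <;> simp [e1, d3, e3, d4, c1] <;> ring⟩
      · rcases le_total b d with hbd | hbd
        · left; right
          exact ⟨a - b, 2*b, c, d - b, by linarith, by positivity, hc, by linarith,
            by funext i; fin_cases i <;> simp [e1, d3, e3, d4, c1] <;> ring⟩
        · right
          exact ⟨a - d, b - d, c, 2*d, by linarith, by linarith, hc, by positivity,
            by funext i; fin_cases i <;> simp [e1, d3, e3, d4, c1] <;> ring⟩
    · rintro ((⟨a, b, c, d, ha, hb, hc, hd, rfl⟩ | ⟨a, b, c, d, ha, hb, hc, hd, rfl⟩) |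
        ⟨a, b, c, d, ha, hb, hc, hd, rfl⟩)
      · exact ⟨a/2, b + a/2, c, d + a/2, by positivity, by linarith, hc, by linarith,
          by funext i; fin_cases i <;> simp [e1, d3, e3, d4, c1] <;> ring⟩
      · exact ⟨a + b/2, b/2, c, d + b/2, by linarith, by positivity, hc, by linarith,
          by funext i; fin_cases i <;> simp [e1, d3, e3, d4, c1] <;> ring⟩
      · exact ⟨a + d/2, b + d/2, c, d/2, by linarith, by linarith, hc, by positivity,
          by funext i; fin_cases i <;> simp [e1, d3, e3, d4, c1] <;> ring⟩
  · rw [colMat, Matrix.det_transpose]; simp [Matrix.det_succ_row_zero, Fin.sum_univ_succ, Fin.succAbove, Matrix.det_fin_three, c1, d3, e3, d4, e1]; norm_num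
  · rw [colMat, Matrix.det_transpose]; simp [Matrix.det_succ_row_zero, Fin.sum_univ_succ, Fin.succAbove, Matrix.det_fin_three, c1, d3, e3, d4, e1]
  · rw [colMat, Matrix.det_transpose]; simp [Matrix.det_succ_row_zero, Fin.sum_univ_succ, Fin.succAbove, Matrix.det_fin_three, c1, d3, e3, d4, e1]
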